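/- Let α ∈ Sⁿ, let r_α be any element of G preserving ℝ^{n+1}×{0} with r_α(α,1) = e₁, let (p,q) ∈ ℤ^{n+1} × ℕ with p/q ∈ Sⁿ, and let δ > 0. If for some t > 0 one has ‖g_t r_α(p,q)‖ < δ, then there exists a real N > q such that ‖α − p/q‖ < 2δ/√(qN). -/

import Mathlib

open MeasureTheory

/-- The unit Euclidean sphere `Sⁿ` in `ℝ^{n+1}` (the ambient space `Fin (n+1) → ℝ`
carries the supremum norm). -/
noncomputable def unitSphere (n : ℕ) : Set (Fin (n + 1) → ℝ) :=
  {x | ∑ i, x i ^ 2 = 1}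

/-- The rational point `p/q` in `ℝ^{n+1}`. -/
noncomputable def ratPt (n : ℕ) (p : Fin (n + 1) → ℤ) (q : ℕ) : Fin (n + 1) → ℝ :=
  fun i => (p i : ℝ) / (q : ℝ)

/-- The quadratic form `Q(x) = x₁² + ⋯ + x_{n+1}² − x_{n+2}²` on `ℝ^{n+2}`. -/
noncomputable def Qform (n : ℕ) (x : Fin (n + 2) → ℝ) : ℝ :=
  (∑ i : Fin (n + 1), x i.castSucc ^ 2) - x (Fin.last (n + 1)) ^ 2

/-- `Λ₀ = ℤ^{n+2} ∩ L`, the integer points of the light cone `L = {Q = 0}`. -/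
noncomputable def Lambda0 (n : ℕ) : Set (Fin (n + 2) → ℝ) :=
  {v | (∀ i, ∃ m : ℤ, v i = (m : ℝ)) ∧ Qform n v = 0}

/-- Membership in `G = SO(Q)`: determinant one and preservation of `Q`. -/
def isSOQ (n : ℕ) (g : Matrix (Fin (n + 2)) (Fin (n + 2)) ℝ) : Prop :=
  g.det = 1 ∧ ∀ x, Qform n (g.mulVec x) = Qform n x

/-- The one-parameter diagonal flow `g_t`. -/
noncomputable def gFlow (n : ℕ) (t : ℝ) : Matrix (Fin (n + 2)) (Fin (n + 2)) ℝ :=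
  Matrix.of fun i j =>
    if i = 0 ∧ j = 0 then Real.cosh t
    else if i = 0 ∧ j = Fin.last (n + 1) then -Real.sinh t
    else if i = Fin.last (n + 1) ∧ j = 0 then -Real.sinh t
    else if i = Fin.last (n + 1) ∧ j = Fin.last (n + 1) then Real.cosh t
    else if i = j then 1 else 0

/-- The vector `e₁ = (1,0,…,0,1) ∈ L`. -/
noncomputable def eOne (n : ℕ) : Fin (n + 2) → ℝ :=
  fun i => if i = 0 then 1 else if i = Fin.last (n + 1) then 1 else 0

/-- The embedding `α ↦ (α,1)` of `Sⁿ` into the light cone. -/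
noncomputable def embedS (n : ℕ) (α : Fin (n + 1) → ℝ) : Fin (n + 2) → ℝ :=
  Fin.snoc α 1

/-- The vector `(p,q) ∈ ℝ^{n+2}` with first `n+1` coordinates `p` and last coordinate `q`. -/
noncomputable def vecPQ (n : ℕ) (p : Fin (n + 1) → ℤ) (q : ℕ) : Fin (n + 2) → ℝ :=
  Fin.snoc (fun i => (p i : ℝ)) (q : ℝ)

/-- `g` preserves the subspace `ℝ^{n+1} × {0}`. -/
def preservesHyperplane (n : ℕ) (g : Matrix (Fin (n + 2)) (Fin (n + 2)) ℝ) : Prop :=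
  ∀ x : Fin (n + 2) → ℝ, x (Fin.last (n + 1)) = 0 → g.mulVec x (Fin.last (n + 1)) = 0

/-- `ω(Λ)`: the infimum of the (sup) norms of the nonzero vectors of `Λ`. -/
noncomputable def omegaMin (n : ℕ) (Λ : Set (Fin (n + 2) → ℝ)) : ℝ :=
  sInf ((fun v => ‖v‖) '' {v | v ∈ Λ ∧ v ≠ 0})

/-- The lattice `g Λ₀`. -/
noncomputable def latticeOf (n : ℕ) (g : Matrix (Fin (n + 2)) (Fin (n + 2)) ℝ) :
    Set (Fin (n + 2) → ℝ) :=
  (fun v => g.mulVec v) '' Lambda0 n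

set_option maxHeartbeats 1000000

lemma norm_le_sqrt_sum_sq {m : ℕ} (x : Fin m → ℝ) : ‖x‖ ≤ Real.sqrt (∑ i, x i ^ 2) := by
  rw [pi_norm_le_iff_of_nonneg (Real.sqrt_nonneg _)]
  intro i
  rw [Real.norm_eq_abs, ← Real.sqrt_sq_eq_abs]
  exact Real.sqrt_le_sqrt (Finset.single_le_sum (f := fun j => x j ^ 2)
    (fun j _ => sq_nonneg _) (Finset.mem_univ i))

lemma Qform_sub (n : ℕ) (x y : Fin (n + 2) → ℝ) :
    Qform n (x - y) = Qform n x
      - 2 * ((∑ i : Fin (n+1), x i.castSucc * y i.castSucc)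
          - x (Fin.last (n+1)) * y (Fin.last (n+1)))
      + Qform n y := by
  have h : ∑ i : Fin (n+1), 2 * x i.castSucc * y i.castSucc
      = 2 * ∑ i : Fin (n+1), x i.castSucc * y i.castSucc := by
    rw [Finset.mul_sum]; exact Finset.sum_congr rfl fun i _ => by ring
  simp only [Qform, Pi.sub_apply, sub_sq, Finset.sum_add_distrib, Finset.sum_sub_distrib, h]
  ring

/-- Lemma (close vector): if `‖g_t r_α (p,q)‖ < δ` for some `t > 0`, then there exists a
real `N > q` with `‖α − p/q‖ < 2δ/√(qN)`. -/
theorem close_vector (n : ℕ) (hn : 1 ≤ n) (α : Fin (n + 1) → ℝ) (hα : α ∈ unitSphere n)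
    (rα : Matrix (Fin (n + 2)) (Fin (n + 2)) ℝ) (hrG : isSOQ n rα)
    (hrP : preservesHyperplane n rα) (hrα : rα.mulVec (embedS n α) = eOne n)
    (p : Fin (n + 1) → ℤ) (q : ℕ) (hq : 0 < q) (hpq : ratPt n p q ∈ unitSphere n)
    (δ : ℝ) (hδ : 0 < δ) (t : ℝ) (ht : 0 < t)
    (hsmall : ‖(gFlow n t * rα).mulVec (vecPQ n p q)‖ < δ) :
    ∃ N : ℝ, (q : ℝ) < N ∧
      ‖α - ratPt n p q‖ < 2 * δ / Real.sqrt ((q : ℝ) * N) := by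
  have hlast0 : (0 : Fin (n + 2)) ≠ Fin.last (n + 1) := by
    simp [Fin.ext_iff]
  have hq' : (0:ℝ) < (q:ℝ) := by exact_mod_cast hq
  set v := rα.mulVec (vecPQ n p q) with hv
  set u := vecPQ n p q - (q : ℝ) • embedS n α with hu_def
  have huc : ∀ i : Fin (n+1), u i.castSucc = (p i : ℝ) - q * α i := by
    intro i
    simp [hu_def, vecPQ, embedS, Fin.snoc_castSucc]
  have hulast : u (Fin.last (n+1)) = 0 := by
    simp [hu_def, vecPQ, embedS, Fin.snoc_last]
  have hmu : rα.mulVec u = v - (q:ℝ) • eOne n := by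
    rw [hu_def, Matrix.mulVec_sub, Matrix.mulVec_smul, hrα]
  -- v last = q
  have heol : eOne n (Fin.last (n+1)) = 1 := by
    simp [eOne, hlast0.symm]
  have hvlast : v (Fin.last (n+1)) = q := by
    have h := hrP u hulast
    rw [hmu] at h
    simp only [Pi.sub_apply, Pi.smul_apply, heol, smul_eq_mul, mul_one] at h
    linarith
  -- sum of p² = q²
  have hsum_p : ∑ i, ((p i : ℝ))^2 = (q:ℝ)^2 := by
    have h := hpq
    simp only [unitSphere, ratPt, Set.mem_setOf_eq, div_pow] at h
    rw [← Finset.sum_div] at h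
    field_simp at h
    linarith
  -- Q(vecPQ) = 0, hence Q(v) = 0
  have hQv : Qform n v = 0 := by
    rw [hv, hrG.2]
    simp [Qform, vecPQ, Fin.snoc_castSucc, Fin.snoc_last, hsum_p]
  -- eOne components
  have heOc : ∀ i : Fin (n+1), eOne n i.castSucc = if i = 0 then 1 else 0 := by
    intro i
    by_cases h : i = 0
    · simp [eOne, h]
    · simp [eOne, h, Fin.castSucc_eq_zero_iff, (Fin.castSucc_lt_last i).ne]
  set a := v 0 with ha_def
  -- key identity
  have key : ∑ i, ((p i:ℝ) - q * α i)^2 = 2*(q:ℝ)*((q:ℝ) - a) := by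
    have hQu : Qform n u = ∑ i, ((p i : ℝ) - q * α i)^2 := by
      simp only [Qform, hulast]
      rw [Finset.sum_congr rfl (fun i _ => by rw [huc i])]
      ring
    have hB : ∑ i : Fin (n+1), v i.castSucc * ((q:ℝ) • eOne n) i.castSucc = (q:ℝ) * a := by
      have hpt : ∀ i : Fin (n+1), v i.castSucc * ((q:ℝ) • eOne n) i.castSucc
          = if i = 0 then v i.castSucc * (q:ℝ) else 0 := by
        intro i
        rw [Pi.smul_apply, heOc i, smul_eq_mul]
        by_cases h : i = 0 <;> simp [h, mul_comm]
      rw [Finset.sum_congr rfl (fun i _ => hpt i),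
        Finset.sum_ite_eq' Finset.univ (0 : Fin (n+1)) (fun i => v i.castSucc * (q:ℝ))]
      simp [ha_def, mul_comm]
    have hQe : Qform n ((q:ℝ) • eOne n) = 0 := by
      simp only [Qform, Pi.smul_apply, smul_eq_mul, heol, mul_one]
      have hpt : ∀ i : Fin (n+1), ((q:ℝ) * eOne n i.castSucc)^2
          = if i = 0 then (q:ℝ)^2 else 0 := by
        intro i
        rw [heOc i]
        by_cases h : i = 0 <;> simp [h]
      rw [Finset.sum_congr rfl (fun i _ => hpt i),
        Finset.sum_ite_eq' Finset.univ (0 : Fin (n+1)) (fun _ => (q:ℝ)^2)]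
      simp
    have h1 : Qform n (v - (q:ℝ) • eOne n) = ∑ i, ((p i : ℝ) - q * α i)^2 := by
      rw [← hmu, hrG.2, hQu]
    rw [Qform_sub, hB, hQe, hQv, hvlast] at h1
    simp only [Pi.smul_apply, heol, smul_eq_mul, mul_one] at h1
    linarith
  have hsum_nonneg : (0:ℝ) ≤ ∑ i, ((p i:ℝ) - q * α i)^2 :=
    Finset.sum_nonneg fun i _ => sq_nonneg _
  have haq : a ≤ q := by nlinarith
  -- coordinates of the flowed vector
  have hw : (gFlow n t * rα).mulVec (vecPQ n p q) = (gFlow n t).mulVec v := by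
    rw [hv, Matrix.mulVec_mulVec]
  have hg0 : ∀ j, gFlow n t 0 j * v j
      = (if j = 0 then Real.cosh t * a else 0)
        + (if j = Fin.last (n+1) then -Real.sinh t * v (Fin.last (n+1)) else 0) := by
    intro j
    by_cases h0 : j = 0
    · subst h0; simp [gFlow, hlast0, hlast0.symm, ha_def]
    · by_cases h1 : j = Fin.last (n+1)
      · subst h1; simp [gFlow, hlast0, hlast0.symm]
      · simp [gFlow, h0, h1, Ne.symm h0]
  have hglast : ∀ j, gFlow n t (Fin.last (n+1)) j * v j
      = (if j = 0 then -Real.sinh t * a else 0)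
        + (if j = Fin.last (n+1) then Real.cosh t * v (Fin.last (n+1)) else 0) := by
    intro j
    by_cases h0 : j = 0
    · subst h0; simp [gFlow, hlast0, hlast0.symm, ha_def]
    · by_cases h1 : j = Fin.last (n+1)
      · subst h1; simp [gFlow, hlast0, hlast0.symm]
      · simp [gFlow, h0, h1, Ne.symm h1]
  have hw0 : (gFlow n t).mulVec v 0 = Real.cosh t * a - Real.sinh t * q := by
    simp only [Matrix.mulVec, dotProduct]
    rw [Finset.sum_congr rfl (fun j _ => hg0 j), Finset.sum_add_distrib,
      Finset.sum_ite_eq' Finset.univ (0 : Fin (n+2)) (fun _ => Real.cosh t * a),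
      Finset.sum_ite_eq' Finset.univ (Fin.last (n+1)) (fun _ => -Real.sinh t * v (Fin.last (n+1)))]
    simp [hvlast]
    ring
  have hwlast : (gFlow n t).mulVec v (Fin.last (n+1))
      = -Real.sinh t * a + Real.cosh t * q := by
    simp only [Matrix.mulVec, dotProduct]
    rw [Finset.sum_congr rfl (fun j _ => hglast j), Finset.sum_add_distrib,
      Finset.sum_ite_eq' Finset.univ (0 : Fin (n+2)) (fun _ => -Real.sinh t * a),
      Finset.sum_ite_eq' Finset.univ (Fin.last (n+1)) (fun _ => Real.cosh t * v (Fin.last (n+1)))]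
    simp [hvlast]
  have hbound : ∀ i, |((gFlow n t).mulVec v) i| < δ := by
    intro i
    have h1 : ‖((gFlow n t * rα).mulVec (vecPQ n p q)) i‖
        ≤ ‖(gFlow n t * rα).mulVec (vecPQ n p q)‖ := norm_le_pi_norm _ i
    rw [hw] at h1
    rw [← Real.norm_eq_abs]
    calc ‖((gFlow n t).mulVec v) i‖ ≤ _ := h1
      _ < δ := by rw [← hw]; exact hsmall
  have hb0 := hbound 0
  have hblast := hbound (Fin.last (n+1))
  rw [hw0, abs_lt] at hb0
  rw [hwlast, abs_lt] at hblast
  have hsinh : 0 < Real.sinh t := Real.sinh_pos_iff.mpr ht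
  have hcs : Real.cosh t - Real.sinh t = Real.exp (-t) := Real.cosh_sub_sinh t
  have hca : Real.cosh t + Real.sinh t = Real.exp t := Real.cosh_add_sinh t
  have hexp : 0 < Real.exp t := Real.exp_pos t
  have hexpn : 0 < Real.exp (-t) := Real.exp_pos (-t)
  -- q e^{-t} < δ
  have h1 : (0:ℝ) ≤ ((q:ℝ) - a) * Real.sinh t := mul_nonneg (by linarith) hsinh.le
  have hqδ : (q:ℝ) * Real.exp (-t) < δ := by
    calc (q:ℝ) * Real.exp (-t) = (q:ℝ) * Real.cosh t - (q:ℝ) * Real.sinh t := by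
          rw [← hcs]; ring
      _ ≤ -Real.sinh t * a + Real.cosh t * (q:ℝ) := by nlinarith [h1]
      _ < δ := hblast.2
  -- (q - a) e^{t} < 2δ
  have hqa : ((q:ℝ) - a) * Real.exp t < 2 * δ := by
    have h2 : ((q:ℝ) - a) * Real.exp t
        = (-Real.sinh t * a + Real.cosh t * (q:ℝ))
          + (-(Real.cosh t * a - Real.sinh t * (q:ℝ))) := by
      rw [← hca]; ring
    linarith [hblast.2, hb0.1]
  have hqa0 : (0:ℝ) ≤ (q:ℝ) - a := by linarith
  -- q < δ e^t
  have hexpmul : Real.exp (-t) * Real.exp t = 1 := by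
    rw [← Real.exp_add]; simp
  have hqlt : (q:ℝ) < δ * Real.exp t := by
    have h3 := mul_lt_mul_of_pos_right hqδ hexp
    have h4 : (q:ℝ) * Real.exp (-t) * Real.exp t = (q:ℝ) := by
      rw [mul_assoc, hexpmul, mul_one]
    linarith
  -- choose N
  refine ⟨((q:ℝ) + δ * Real.exp t) / 2, by linarith, ?_⟩
  set N := ((q:ℝ) + δ * Real.exp t) / 2 with hN_def
  have hNq : (q:ℝ) < N := by rw [hN_def]; linarith
  have hNlt : N < δ * Real.exp t := by rw [hN_def]; linarith
  have hN0 : 0 < N := lt_trans hq' hNq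
  have hqN : 0 < (q:ℝ) * N := mul_pos hq' hN0
  have hsqrt : 0 < Real.sqrt ((q:ℝ) * N) := Real.sqrt_pos.mpr hqN
  -- the sum S
  have hS : ∑ i, (α i - (p i:ℝ)/(q:ℝ))^2 = 2*((q:ℝ) - a)/(q:ℝ) := by
    have h1 : ∀ i, (α i - (p i:ℝ)/(q:ℝ))^2 = ((p i:ℝ) - q*α i)^2 / (q:ℝ)^2 := by
      intro i; field_simp; ring
    rw [Finset.sum_congr rfl (fun i _ => h1 i), ← Finset.sum_div, key]
    field_simp
  have hdiff : α - ratPt n p q = fun i => α i - (p i:ℝ)/(q:ℝ) := rfl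
  have hL : ‖α - ratPt n p q‖ ≤ Real.sqrt (2*((q:ℝ) - a)/(q:ℝ)) := by
    rw [hdiff, ← hS]
    exact norm_le_sqrt_sum_sq _
  -- final comparison
  have h5 : ((q:ℝ) - a) * N < 2 * δ^2 := by
    calc ((q:ℝ) - a) * N ≤ ((q:ℝ) - a) * (δ * Real.exp t) :=
          mul_le_mul_of_nonneg_left hNlt.le hqa0
      _ = δ * (((q:ℝ) - a) * Real.exp t) := by ring
      _ < δ * (2 * δ) := mul_lt_mul_of_pos_left hqa hδ
      _ = 2 * δ^2 := by ring
  have h6 : 2*((q:ℝ) - a)/(q:ℝ) < (2 * δ / Real.sqrt ((q:ℝ) * N))^2 := by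
    have hsq : (2 * δ / Real.sqrt ((q:ℝ) * N))^2 = 4 * δ^2 / ((q:ℝ) * N) := by
      rw [div_pow, Real.sq_sqrt (le_of_lt hqN)]
      ring_nf
    rw [hsq, div_lt_div_iff₀ hq' hqN]
    have h6' := mul_lt_mul_of_pos_left h5 hq'
    calc 2*((q:ℝ)-a) * ((q:ℝ)*N) = 2*((q:ℝ) * (((q:ℝ)-a)*N)) := by ring
      _ < 2*((q:ℝ)*(2*δ^2)) := by linarith
      _ = 4*δ^2*(q:ℝ) := by ring
  have h7 : Real.sqrt (2*((q:ℝ) - a)/(q:ℝ)) < 2 * δ / Real.sqrt ((q:ℝ) * N) := by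
    rw [Real.sqrt_lt' (by positivity)]
    exact h6
  linarith
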